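/- arXiv:math/0310078 — 2 statements merged into one kernel-verified Lean document; each statement's English description precedes it below -/
import Mathlib

section
/- Let G be a mixed graph (a multigraph in which some edges are directed and the rest undirected) that is 2-edge-connected. Then the undirected edges of G can be oriented so that the resulting digraph is strongly connected if and only if the digraph obtained from G by contracting all undirected edges is strongly connected. -/
/-- A mixed graph: a multigraph with endpoint maps `fst`, `snd`, in which the
edges in `directed` are directed from `fst e` to `snd e`, and the remaining
edges are undirected. -/
structure MixedGraph (V E : Type*) where
  fst : E → V
  snd : E → V
  directed : Set E

namespace MixedGraph

variable {V E : Type*} (G : MixedGraph V E)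

/-- `o : E → Bool` orients every edge (`true` = from `fst` to `snd`).  It is an
orientation of the mixed graph if it keeps every directed edge as given. -/
def IsOrientation (o : E → Bool) : Prop := ∀ e ∈ G.directed, o e = true

/-- One directed step in the digraph obtained from the full orientation `o`. -/
def step (o : E → Bool) (u v : V) : Prop :=
  ∃ e, (o e = true ∧ G.fst e = u ∧ G.snd e = v) ∨
       (o e = false ∧ G.snd e = u ∧ G.fst e = v)

/-- The digraph given by the orientation `o` is strongly connected. -/
def StrongConn (o : E → Bool) : Prop :=
  ∀ u v : V, Relation.ReflTransGen (G.step o) u v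

/-- Adjacency in the underlying undirected multigraph, using only edges in `S`. -/
def adjIn (S : Set E) (u v : V) : Prop :=
  ∃ e ∈ S, (G.fst e = u ∧ G.snd e = v) ∨ (G.fst e = v ∧ G.snd e = u)

/-- `G` is 2-edge-connected: connected, and still connected after removing any
single edge (no bridge). -/
def TwoEdgeConnected : Prop :=
  (∀ u v : V, Relation.ReflTransGen (G.adjIn Set.univ) u v) ∧
  ∀ e : E, ∀ u v : V, Relation.ReflTransGen (G.adjIn {e' | e' ≠ e}) u v

end MixedGraph

namespace MixedGraph

variable {V E : Type*} (G : MixedGraph V E)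

/-- Two vertices are related if they are the endpoints of some undirected edge. -/
def undirRel (a b : V) : Prop :=
  ∃ e, e ∉ G.directed ∧ ((G.fst e = a ∧ G.snd e = b) ∨ (G.fst e = b ∧ G.snd e = a))

/-- One arc of the digraph obtained from `G` by contracting all undirected
edges (identifying the endpoints of every undirected edge, keeping the
directed edges). -/
def contractedStep (x y : Quot G.undirRel) : Prop :=
  ∃ e ∈ G.directed, Quot.mk G.undirRel (G.fst e) = x ∧ Quot.mk G.undirRel (G.snd e) = y

end MixedGraph

namespace MGAux

open Relation

variable {V E : Type*}

/-- Tail (departure end) of an oriented edge. -/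
def tl (G : MixedGraph V E) (p : E × Bool) : V := if p.2 then G.fst p.1 else G.snd p.1

/-- Head (arrival end) of an oriented edge. -/
def hd (G : MixedGraph V E) (p : E × Bool) : V := if p.2 then G.snd p.1 else G.fst p.1

/-- One directed step using an oriented pair in `P`. -/
def dstep (G : MixedGraph V E) (P : Set (E × Bool)) (u v : V) : Prop :=
  ∃ p ∈ P, tl G p = u ∧ hd G p = v

/-- The edge `e` is not oriented by `P`. -/
def unor (P : Set (E × Bool)) (e : E) : Prop := ∀ b, (e, b) ∉ P

/-- A mixed step: either a directed step using an oriented edge, or a traversal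
of an unoriented edge in either direction. -/
def mstep (G : MixedGraph V E) (P : Set (E × Bool)) (u v : V) : Prop :=
  dstep G P u v ∨ ∃ e, unor P e ∧
    ((G.fst e = u ∧ G.snd e = v) ∨ (G.snd e = u ∧ G.fst e = v))

/-- Base partial orientation: exactly the given directed edges. -/
def Obase (G : MixedGraph V E) : Set (E × Bool) := {p | p.1 ∈ G.directed ∧ p.2 = true}

def Func (P : Set (E × Bool)) : Prop := ∀ e b b', (e, b) ∈ P → (e, b') ∈ P → b = b'

/-- Invariant of the Zorn argument: `P` extends the base orientation, is
functional, and every extra oriented edge has a directed return path. -/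
def Inv (G : MixedGraph V E) (P : Set (E × Bool)) : Prop :=
  Obase G ⊆ P ∧ Func P ∧
    ∀ p ∈ P, p.1 ∉ G.directed → ReflTransGen (dstep G P) (hd G p) (tl G p)

theorem dstep_mono {G : MixedGraph V E} {P Q : Set (E × Bool)} (h : P ⊆ Q) :
    ∀ u v, dstep G P u v → dstep G Q u v := by
  rintro u v ⟨p, hp, h1, h2⟩
  exact ⟨p, h hp, h1, h2⟩


/-- Walks with explicit vertex list (the list contains all vertices,
beginning with the start and ending with the end). -/
inductive IsWalk (R : V → V → Prop) : V → List V → V → Prop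
  | base (x : V) : IsWalk R x [x] x
  | cons {x y z : V} {l : List V} (h : R x y) (w : IsWalk R y l z) : IsWalk R x (x :: l) z

theorem walk_of_rtg {R : V → V → Prop} {x z : V} (h : ReflTransGen R x z) :
    ∃ l, IsWalk R x l z := by
  induction h using Relation.ReflTransGen.head_induction_on with
  | refl => exact ⟨[z], .base z⟩
  | head hstep _ ih =>
    obtain ⟨l, w⟩ := ih
    exact ⟨_, .cons hstep w⟩

theorem walk_head {R : V → V → Prop} {x : V} {l : List V} {z : V} (w : IsWalk R x l z) :
    ∃ t, l = x :: t := by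
  cases w
  · exact ⟨[], rfl⟩
  · exact ⟨_, rfl⟩

theorem walk_suffix {R : V → V → Prop} {y : V} {l : List V} {z : V} (w : IsWalk R y l z) :
    ∀ x ∈ l, ∃ s, s.Sublist l ∧ IsWalk R x s z := by
  induction w with
  | base y =>
    intro x hx
    rw [List.mem_singleton] at hx
    subst hx
    exact ⟨[x], List.Sublist.refl _, .base x⟩
  | cons h w ih =>
    intro x hx
    rcases List.mem_cons.mp hx with rfl | hx'
    · exact ⟨_, List.Sublist.refl _, .cons h w⟩
    · obtain ⟨s, hs, ws⟩ := ih x hx'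
      exact ⟨s, hs.cons _, ws⟩

theorem walk_nodup {R : V → V → Prop} {x : V} {l : List V} {z : V} (w : IsWalk R x l z) :
    ∃ l', IsWalk R x l' z ∧ l'.Nodup := by
  induction w with
  | base x => exact ⟨[x], .base x, List.nodup_singleton x⟩
  | @cons x y z l h w ih =>
    obtain ⟨t, wt, ht⟩ := ih
    by_cases hx : x ∈ t
    · obtain ⟨s, hs, ws⟩ := walk_suffix wt _ hx
      exact ⟨s, ws, ht.sublist hs⟩
    · exact ⟨_, .cons h wt, List.nodup_cons.mpr ⟨hx, ht⟩⟩

/-- The mixed step relation avoiding a fixed edge `e₀`. -/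
def Rrel (G : MixedGraph V E) (P : Set (E × Bool)) (e₀ : E) (u v : V) : Prop :=
  dstep G P u v ∨ ∃ e, unor P e ∧ e ≠ e₀ ∧
    ((G.fst e = u ∧ G.snd e = v) ∨ (G.snd e = u ∧ G.fst e = v))


theorem rec_orient (G : MixedGraph V E) (P : Set (E × Bool)) (e₀ : E) {x : V} {l : List V}
    {z : V} (w : IsWalk (Rrel G P e₀) x l z) :
    l.Nodup → ∀ Q : Set (E × Bool), P ⊆ Q → Func Q →
      (∀ p ∈ Q, p ∉ P → p.1 = e₀ ∨ (tl G p ∉ l ∧ hd G p ∉ l.tail)) →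
      ∃ Q', Q ⊆ Q' ∧ Func Q' ∧
        (∀ p ∈ Q', p ∉ Q → p.1 ≠ e₀ ∧ unor P p.1 ∧
          ReflTransGen (dstep G Q') (hd G p) z ∧ ReflTransGen (dstep G Q') x (tl G p)) ∧
        ReflTransGen (dstep G Q') x z := by
  induction w with
  | base a =>
    intro _ Q _ hF _
    exact ⟨Q, subset_rfl, hF, fun p hp hnp => absurd hp hnp, .refl⟩
  | @cons x y z l hxy w ih =>
    intro hnd Q hPQ hF hC
    have hnd' : l.Nodup := hnd.of_cons
    obtain ⟨t, rfl⟩ := walk_head w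
    have hxl : x ∉ (y :: t) := (List.nodup_cons.mp hnd).1
    have hyt : y ∉ t := (List.nodup_cons.mp hnd').1
    rcases hxy with hstep | ⟨g, hung, hge, hends⟩
    · -- already-directed step
      have hC' : ∀ p ∈ Q, p ∉ P → p.1 = e₀ ∨ (tl G p ∉ (y :: t) ∧ hd G p ∉ (y :: t).tail) := by
        intro p hp hnp
        rcases hC p hp hnp with h | ⟨h1, h2⟩
        · exact Or.inl h
        · exact Or.inr ⟨fun hm => h1 (List.mem_cons_of_mem _ hm),
            fun hm => h2 (List.mem_cons_of_mem _ hm)⟩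
      obtain ⟨Q', h1, h2, h3, h4⟩ := ih hnd' Q hPQ hF hC'
      have hstep' : dstep G Q' x y := dstep_mono (hPQ.trans h1) _ _ hstep
      refine ⟨Q', h1, h2, ?_, ReflTransGen.head hstep' h4⟩
      intro p hp hnp
      obtain ⟨ha, hb, hcz, hxt⟩ := h3 p hp hnp
      exact ⟨ha, hb, hcz, ReflTransGen.head hstep' hxt⟩
    · -- fresh undirected step: orient it
      have hxy' : x ≠ y := by
        rintro rfl
        exact hxl List.mem_cons_self
      obtain ⟨b, htlb, hhdb⟩ : ∃ b, tl G (g, b) = x ∧ hd G (g, b) = y := by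
        rcases hends with ⟨h1, h2⟩ | ⟨h1, h2⟩
        · exact ⟨true, h1, h2⟩
        · exact ⟨false, h1, h2⟩
      have hgQ : ∀ b', (g, b') ∉ Q := by
        intro b' hb'
        by_cases hP : (g, b') ∈ P
        · exact hung b' hP
        · rcases hC _ hb' hP with h | ⟨h1, _⟩
          · exact hge h
          · have : tl G (g, b') = x ∨ tl G (g, b') = y := by
              rcases hends with ⟨e1, e2⟩ | ⟨e1, e2⟩ <;> cases b' <;>
                simp [tl, e1, e2]
            rcases this with h | h <;> rw [h] at h1
            · exact h1 List.mem_cons_self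
            · exact h1 (List.mem_cons_of_mem _ List.mem_cons_self)
      have hp₀Q : (g, b) ∉ Q := hgQ b
      have hF₁ : Func (insert (g, b) Q) := by
        intro e' b1 b2 hb1 hb2
        rcases Set.mem_insert_iff.mp hb1 with h1 | h1 <;>
          rcases Set.mem_insert_iff.mp hb2 with h2 | h2
        · rw [Prod.ext_iff] at h1 h2
          exact h1.2.trans h2.2.symm
        · exfalso
          rw [Prod.ext_iff] at h1
          obtain ⟨rfl, _⟩ := h1
          exact hgQ _ h2
        · exfalso
          rw [Prod.ext_iff] at h2
          obtain ⟨rfl, _⟩ := h2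
          exact hgQ _ h1
        · exact hF _ _ _ h1 h2
      have hPQ₁ : P ⊆ insert (g, b) Q := hPQ.trans (Set.subset_insert _ _)
      have hC₁ : ∀ p ∈ insert (g, b) Q, p ∉ P →
          p.1 = e₀ ∨ (tl G p ∉ (y :: t) ∧ hd G p ∉ (y :: t).tail) := by
        intro p hp hnp
        rcases Set.mem_insert_iff.mp hp with rfl | hp'
        · refine Or.inr ⟨?_, ?_⟩
          · rw [htlb]; exact hxl
          · rw [hhdb]; exact hyt
        · rcases hC p hp' hnp with h | ⟨h1, h2⟩
          · exact Or.inl h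
          · exact Or.inr ⟨fun hm => h1 (List.mem_cons_of_mem _ hm),
              fun hm => h2 (List.mem_cons_of_mem _ hm)⟩
      obtain ⟨Q', h1, h2, h3, h4⟩ := ih hnd' (insert (g, b) Q) hPQ₁ hF₁ hC₁
      have hstep' : dstep G Q' x y := ⟨(g, b), h1 (Set.mem_insert _ _), htlb, hhdb⟩
      refine ⟨Q', (Set.subset_insert _ _).trans h1, h2, ?_, ReflTransGen.head hstep' h4⟩
      intro p hp hnp
      by_cases hpQ₁ : p ∈ insert (g, b) Q
      · have hpg : p = (g, b) := by
          rcases Set.mem_insert_iff.mp hpQ₁ with h | h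
          · exact h
          · exact absurd h hnp
        subst hpg
        refine ⟨hge, hung, ?_, ?_⟩
        · rw [hhdb]; exact h4
        · rw [htlb]
      · obtain ⟨ha, hb, hcz, hxt⟩ := h3 p hp hpQ₁
        exact ⟨ha, hb, hcz, ReflTransGen.head hstep' hxt⟩


set_option maxHeartbeats 1000000 in
/-- The Boesch–Tindell one-edge lemma: in a strongly connected mixed graph whose
underlying graph stays connected after deleting `e₀`, one of the two
orientations of `e₀` admits a return path avoiding `e₀`. -/
theorem bt (G : MixedGraph V E) (e₀ : E)
    (hbridge : ∀ u v : V, ReflTransGen (G.adjIn {e' | e' ≠ e₀}) u v)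
    (P : Set (E × Bool)) (hS : ∀ u v : V, ReflTransGen (mstep G P) u v) :
    ∃ b₀, ReflTransGen (Rrel G P e₀) (hd G (e₀, b₀)) (tl G (e₀, b₀)) := by
  by_contra hcon
  push_neg at hcon
  have hvu : ¬ ReflTransGen (Rrel G P e₀) (G.snd e₀) (G.fst e₀) := by
    simpa [hd, tl] using hcon true
  have huv : ¬ ReflTransGen (Rrel G P e₀) (G.fst e₀) (G.snd e₀) := by
    simpa [hd, tl] using hcon false
  set R := Rrel G P e₀ with hR
  set u := G.fst e₀ with hu
  set v := G.snd e₀ with hv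
  -- every vertex is reachable (avoiding e₀) from v or from u
  have h1 : ∀ x, ReflTransGen R v x ∨ ReflTransGen R u x := by
    intro x
    have hx := hS v x
    induction hx with
    | refl => exact Or.inl .refl
    | tail hst hstep ih =>
      rcases hstep with hds | ⟨e, hun, hends⟩
      · exact ih.imp (fun h => h.tail (Or.inl hds)) (fun h => h.tail (Or.inl hds))
      · by_cases he : e = e₀
        · subst he
          rcases hends with ⟨_, h2⟩ | ⟨_, h2⟩
          · exact Or.inl (h2 ▸ ReflTransGen.refl)
          · exact Or.inr (h2 ▸ ReflTransGen.refl)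
        · exact ih.imp (fun h => h.tail (Or.inr ⟨e, hun, he, hends⟩))
            (fun h => h.tail (Or.inr ⟨e, hun, he, hends⟩))
  -- every vertex reaches (avoiding e₀) u or v
  have h2 : ∀ x, ReflTransGen R x u ∨ ReflTransGen R x v := by
    intro x
    have hx := hS x u
    induction hx using Relation.ReflTransGen.head_induction_on with
    | refl => exact Or.inl .refl
    | head hstep hrest ih =>
      rcases hstep with hds | ⟨e, hun, hends⟩
      · exact ih.imp (fun h => ReflTransGen.head (Or.inl hds) h)
          (fun h => ReflTransGen.head (Or.inl hds) h)
      · by_cases he : e = e₀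
        · subst he
          rcases hends with ⟨h1', _⟩ | ⟨h1', _⟩
          · exact Or.inl (h1' ▸ ReflTransGen.refl)
          · exact Or.inr (h1' ▸ ReflTransGen.refl)
        · exact ih.imp (fun h => ReflTransGen.head (Or.inr ⟨e, hun, he, hends⟩) h)
            (fun h => ReflTransGen.head (Or.inr ⟨e, hun, he, hends⟩) h)
  have hAB : ∀ x, ReflTransGen R v x → ReflTransGen R x v := by
    intro x hx
    exact (h2 x).resolve_left (fun h => hvu (hx.trans h))
  have hBA : ∀ x, ReflTransGen R x v → ReflTransGen R v x := by
    intro x hx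
    exact (h1 x).resolve_right (fun h => huv (h.trans hx))
  -- along a bridge-avoiding underlying path from v, we stay in A
  have hcl : ∀ x, ReflTransGen (G.adjIn {e' | e' ≠ e₀}) v x → ReflTransGen R v x := by
    intro x hx
    induction hx with
    | refl => exact .refl
    | @tail c d hst hstep ih =>
      obtain ⟨g, hg, hends⟩ := hstep
      by_cases hP : unor P g
      · refine ih.tail (Or.inr ⟨g, hP, hg, ?_⟩)
        tauto
      · obtain ⟨b, hb⟩ : ∃ b, (g, b) ∈ P := by
          simp only [unor, not_forall, not_not] at hP
          exact hP
        have harc : (tl G (g, b) = c ∧ hd G (g, b) = d) ∨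
            (tl G (g, b) = d ∧ hd G (g, b) = c) := by
          rcases hends with ⟨e1, e2⟩ | ⟨e1, e2⟩ <;> cases b <;>
            simp only [tl, hd, if_true, if_false] <;> tauto
        rcases harc with ⟨h1', h2'⟩ | ⟨h1', h2'⟩
        · exact ih.tail (Or.inl ⟨(g, b), hb, h1', h2'⟩)
        · have hcv : ReflTransGen R c v := hAB _ ih
          have hxv : ReflTransGen R d v :=
            ReflTransGen.head (Or.inl ⟨(g, b), hb, h1', h2'⟩) hcv
          exact hBA _ hxv
  exact hvu (hcl u (hbridge v u))

theorem lift (G : MixedGraph V E) {P : Set (E × Bool)} (hInv : Inv G P) :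
    ∀ {u v : V}, ReflTransGen (mstep G (Obase G)) u v → ReflTransGen (mstep G P) u v := by
  intro u v h
  induction h with
  | refl => exact .refl
  | @tail c d hst hstep ih =>
    refine ih.trans ?_
    rcases hstep with ⟨p, hp, h1, h2⟩ | ⟨e, hun, hends⟩
    · exact ReflTransGen.single (Or.inl ⟨p, hInv.1 hp, h1, h2⟩)
    · have hnd : e ∉ G.directed := fun hd' => hun true ⟨hd', rfl⟩
      by_cases hP : unor P e
      · exact ReflTransGen.single (Or.inr ⟨e, hP, hends⟩)
      · obtain ⟨b, hb⟩ : ∃ b, (e, b) ∈ P := by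
          simp only [unor, not_forall, not_not] at hP
          exact hP
        have harc : (tl G (e, b) = c ∧ hd G (e, b) = d) ∨
            (hd G (e, b) = c ∧ tl G (e, b) = d) := by
          rcases hends with ⟨e1, e2⟩ | ⟨e1, e2⟩ <;> cases b <;>
            simp only [tl, hd, if_true, if_false] <;> tauto
        rcases harc with ⟨h1', h2'⟩ | ⟨h1', h2'⟩
        · exact ReflTransGen.single (Or.inl ⟨(e, b), hb, h1', h2'⟩)
        · have hret := hInv.2.2 (e, b) hb hnd
          rw [h1', h2'] at hret
          exact ReflTransGen.mono (fun _ _ hh => Or.inl hh) _ _ hret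

theorem eqv_lift (G : MixedGraph V E) {a b : V} (h : Relation.EqvGen G.undirRel a b) :
    ReflTransGen (mstep G (Obase G)) a b ∧ ReflTransGen (mstep G (Obase G)) b a := by
  induction h with
  | rel a b hab =>
    obtain ⟨e, hnd, hends⟩ := hab
    have hun : unor (Obase G) e := fun b' hb' => hnd hb'.1
    constructor
    · refine ReflTransGen.single (Or.inr ⟨e, hun, ?_⟩)
      tauto
    · refine ReflTransGen.single (Or.inr ⟨e, hun, ?_⟩)
      tauto
  | refl a => exact ⟨.refl, .refl⟩
  | symm a b _ ih => exact ⟨ih.2, ih.1⟩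
  | trans a b c _ _ ih1 ih2 => exact ⟨ih1.1.trans ih2.1, ih2.2.trans ih1.2⟩

theorem base (G : MixedGraph V E)
    (hc : ∀ x y : Quot G.undirRel, ReflTransGen G.contractedStep x y) (u v : V) :
    ReflTransGen (mstep G (Obase G)) u v := by
  have key : ∀ x y, ReflTransGen G.contractedStep x y → ∀ a b : V,
      Quot.mk G.undirRel a = x → Quot.mk G.undirRel b = y →
      ReflTransGen (mstep G (Obase G)) a b := by
    intro x y h
    induction h with
    | refl =>
      intro a b ha hb
      exact (eqv_lift G (Quot.eq.mp (ha.trans hb.symm))).1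
    | tail hst hstep ih =>
      intro a b ha hb
      obtain ⟨e, he, hf, hs⟩ := hstep
      have hpart1 := ih a (G.fst e) ha hf
      have hstep2 : mstep G (Obase G) (G.fst e) (G.snd e) := by
        refine Or.inl ⟨(e, true), ⟨he, rfl⟩, ?_, ?_⟩ <;> simp [tl, hd]
      have hpart3 := (eqv_lift G (Quot.eq.mp (hs.trans hb.symm))).1
      exact (hpart1.tail hstep2).trans hpart3
  exact key _ _ (hc _ _) u v rfl rfl

end MGAux

/-- Let `G` be a 2-edge-connected mixed graph.  Then the undirected edges of
`G` can be oriented so that the resulting digraph is strongly connected if and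
only if the digraph obtained from `G` by contracting all undirected edges is
strongly connected. -/
theorem mixedGraph_strongly_connected_orientation_iff_contraction
    {V E : Type*} (G : MixedGraph V E) (h2 : G.TwoEdgeConnected) :
    (∃ o : E → Bool, G.IsOrientation o ∧ G.StrongConn o) ↔
      ∀ x y : Quot G.undirRel, Relation.ReflTransGen G.contractedStep x y := by
  classical
  open MGAux Relation in
  constructor
  · -- forward direction
    rintro ⟨o, ho, hso⟩ x y
    have key : ∀ a b : V, ReflTransGen (G.step o) a b →
        ReflTransGen G.contractedStep (Quot.mk G.undirRel a) (Quot.mk G.undirRel b) := by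
      intro a b h
      induction h with
      | refl => exact .refl
      | @tail c d hst hstep ih =>
        obtain ⟨e, he⟩ := hstep
        by_cases hdir : e ∈ G.directed
        · have hoe : o e = true := ho e hdir
          rcases he with ⟨_, hc1, hc2⟩ | ⟨h0, _, _⟩
          · exact ih.tail ⟨e, hdir, by rw [hc1], by rw [hc2]⟩
          · rw [hoe] at h0
            exact absurd h0 (by simp)
        · have heq : Quot.mk G.undirRel c = Quot.mk G.undirRel d := by
            apply Quot.sound
            rcases he with ⟨_, hc1, hc2⟩ | ⟨_, hc1, hc2⟩
            · exact ⟨e, hdir, Or.inl ⟨hc1, hc2⟩⟩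
            · exact ⟨e, hdir, Or.inr ⟨hc2, hc1⟩⟩
          exact heq ▸ ih
    induction x using Quot.ind with | _ a =>
    induction y using Quot.ind with | _ b =>
    exact key a b (hso a b)
  · -- backward direction
    intro hc
    have hbase : ∀ u v : V, ReflTransGen (mstep G (Obase G)) u v := base G hc
    -- Zorn's lemma on partial orientations satisfying the invariant
    have hzorn : ∃ P, Obase G ⊆ P ∧ Maximal (· ∈ {P : Set (E × Bool) | Inv G P}) P := by
      apply zorn_subset_nonempty
      · intro c hcS hchain hcne
        refine ⟨⋃₀ c, ?_, fun s hs => Set.subset_sUnion_of_mem hs⟩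
        obtain ⟨P0, hP0⟩ := hcne
        refine ⟨(hcS hP0).1.trans (Set.subset_sUnion_of_mem hP0), ?_, ?_⟩
        · intro e b b' hb hb'
          obtain ⟨P1, hP1, hb1⟩ := hb
          obtain ⟨P2, hP2, hb2⟩ := hb'
          rcases hchain.total hP1 hP2 with hss | hss
          · exact (hcS hP2).2.1 e b b' (hss hb1) hb2
          · exact (hcS hP1).2.1 e b b' hb1 (hss hb2)
        · intro p hp hnd
          obtain ⟨P1, hP1, hp1⟩ := hp
          exact ReflTransGen.mono
            (fun a b hab => dstep_mono (Set.subset_sUnion_of_mem hP1) a b hab) _ _ ((hcS hP1).2.2 p hp1 hnd)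
      · refine ⟨subset_rfl, ?_, ?_⟩
        · intro e b b' hb hb'
          exact hb.2.trans hb'.2.symm
        · intro p hp hnd
          exact absurd hp.1 hnd
    obtain ⟨P, hPbase, hPmem, hPmax⟩ := hzorn
    have hInv : Inv G P := hPmem
    have hstrong : ∀ u v : V, ReflTransGen (mstep G P) u v :=
      fun u v => lift G hInv (hbase u v)
    -- maximality implies every edge is oriented
    have htotal : ∀ e : E, ¬ unor P e := by
      intro e₀ hune₀
      obtain ⟨b₀, hret⟩ := bt G e₀ (h2.2 e₀) P hstrong
      obtain ⟨l, wl⟩ := walk_of_rtg hret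
      obtain ⟨l', wl', hnd⟩ := walk_nodup wl
      have hQF : Func (insert (e₀, b₀) P) := by
        intro e b b' hb hb'
        rcases Set.mem_insert_iff.mp hb with h1 | h1 <;>
          rcases Set.mem_insert_iff.mp hb' with h2 | h2
        · rw [Prod.ext_iff] at h1 h2
          exact h1.2.trans h2.2.symm
        · exfalso
          rw [Prod.ext_iff] at h1
          obtain ⟨rfl, _⟩ := h1
          exact hune₀ _ h2
        · exfalso
          rw [Prod.ext_iff] at h2
          obtain ⟨rfl, _⟩ := h2
          exact hune₀ _ h1
        · exact hInv.2.1 e b b' h1 h2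
      have hQC : ∀ p ∈ insert (e₀, b₀) P, p ∉ P →
          p.1 = e₀ ∨ (tl G p ∉ l' ∧ hd G p ∉ l'.tail) := by
        intro p hp hnp
        rcases Set.mem_insert_iff.mp hp with rfl | hp'
        · exact Or.inl rfl
        · exact absurd hp' hnp
      obtain ⟨Q', h1, h2', h3, h4⟩ := rec_orient G P e₀ wl' hnd
        (insert (e₀, b₀) P) (Set.subset_insert _ _) hQF hQC
      have hsubQ' : P ⊆ Q' := (Set.subset_insert _ _).trans h1
      have he₀Q' : (e₀, b₀) ∈ Q' := h1 (Set.mem_insert _ _)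
      have hInvQ' : Inv G Q' := by
        refine ⟨hInv.1.trans hsubQ', h2', ?_⟩
        intro p hp hndir
        by_cases hpI : p ∈ insert (e₀, b₀) P
        · rcases Set.mem_insert_iff.mp hpI with rfl | hpP
          · exact h4
          · exact ReflTransGen.mono
              (fun a b hab => dstep_mono hsubQ' a b hab) _ _ (hInv.2.2 p hpP hndir)
        · obtain ⟨_, _, hcz, hxt⟩ := h3 p hp hpI
          refine hcz.trans (ReflTransGen.head ?_ hxt)
          exact ⟨(e₀, b₀), he₀Q', rfl, rfl⟩
      have : Q' ⊆ P := hPmax hInvQ' hsubQ'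
      exact hune₀ b₀ (this he₀Q')
    -- build the total orientation
    refine ⟨fun e => if (e, true) ∈ P then true else false, ?_, ?_⟩
    · intro e he
      exact if_pos (hInv.1 (show (e, true) ∈ Obase G from ⟨he, rfl⟩))
    · intro u v
      refine ReflTransGen.mono ?_ _ _ (hstrong u v)
      rintro a b (⟨⟨e, bb⟩, hp, h1', h2'⟩ | ⟨e, hun, _⟩)
      · cases bb
        · have hnt : (e, true) ∉ P := by
            intro h'
            have := hInv.2.1 e true false h' hp
            simp at this
          refine ⟨e, Or.inr ⟨if_neg hnt, ?_, ?_⟩⟩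
          · simpa [tl] using h1'
          · simpa [hd] using h2'
        · refine ⟨e, Or.inl ⟨if_pos hp, ?_, ?_⟩⟩
          · simpa [tl] using h1'
          · simpa [hd] using h2'
      · exact absurd hun (htotal e)
end

section
/- Let G = (V,E) be a mixed graph. The undirected edges of G can be oriented so as to obtain a strongly connected digraph if and only if G is 2-edge-connected and there is no nonempty proper subset U of V such that every edge in the cut δ(U) is directed and oriented from U to V∖U. -/
namespace MixedGraph

variable {V E : Type*} (G : MixedGraph V E)

lemma xor'_inl {a b : Prop} (ha : a) (hb : ¬b) : Xor' a b := Or.inl ⟨ha, hb⟩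
lemma xor'_inr {a b : Prop} (hb : b) (ha : ¬a) : Xor' a b := Or.inr ⟨hb, ha⟩
lemma xor'_elim {a b : Prop} (h : Xor' a b) : (a ∧ ¬b) ∨ (b ∧ ¬a) := h

lemma rtg_cross {α : Type*} {R : α → α → Prop} {U : Set α} {x y : α}
    (h : Relation.ReflTransGen R x y) (hx : x ∉ U) (hy : y ∈ U) :
    ∃ p q, p ∉ U ∧ q ∈ U ∧ R p q := by
  induction h with
  | refl => exact absurd hy hx
  | tail h₁ h₂ ih =>
    rename_i b c
    by_cases hb : b ∈ U
    · exact ih hb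
    · exact ⟨b, c, hb, hy, h₂⟩

/-- The head (source) of edge `e` when given direction `d` (`true` = `fst → snd`). -/
def epSrc (e : E) (d : Bool) : V := if d then G.fst e else G.snd e

def epTgt (e : E) (d : Bool) : V := if d then G.snd e else G.fst e

lemma ep_cases (e : E) (d : Bool) :
    (G.epSrc e d = G.fst e ∧ G.epTgt e d = G.snd e) ∨
    (G.epSrc e d = G.snd e ∧ G.epTgt e d = G.fst e) := by
  cases d <;> simp [epSrc, epTgt]

lemma epTgt_not (e : E) (d : Bool) : G.epTgt e (!d) = G.epSrc e d := by
  cases d <;> simp [epSrc, epTgt]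

@[simp] lemma epSrc_true (e : E) : G.epSrc e true = G.fst e := rfl
@[simp] lemma epSrc_false (e : E) : G.epSrc e false = G.snd e := rfl
@[simp] lemma epTgt_true (e : E) : G.epTgt e true = G.snd e := rfl
@[simp] lemma epTgt_false (e : E) : G.epTgt e false = G.fst e := rfl

/-- All committed directed pairs: the partial orientation `S` together with the
directed edges of `G`. -/
def dset (S : Set (E × Bool)) : Set (E × Bool) :=
  S ∪ {p | p.1 ∈ G.directed ∧ p.2 = true}

lemma dset_mono {S S' : Set (E × Bool)} (h : S ⊆ S') : G.dset S ⊆ G.dset S' :=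
  Set.union_subset_union_left _ h

lemma dset_insert (p : E × Bool) (S : Set (E × Bool)) :
    G.dset (insert p S) = insert p (G.dset S) := by
  simp [dset, Set.insert_union]

/-- A directed step using a committed pair. -/
def sstep (S : Set (E × Bool)) (u v : V) : Prop :=
  ∃ p ∈ G.dset S, G.epSrc p.1 p.2 = u ∧ G.epTgt p.1 p.2 = v

lemma sstep_mono {S S' : Set (E × Bool)} (h : G.dset S ⊆ G.dset S') {u v : V}
    (hs : G.sstep S u v) : G.sstep S' u v := by
  obtain ⟨p, hp, h1, h2⟩ := hs
  exact ⟨p, h hp, h1, h2⟩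

/-- `e` is entirely free: neither directed nor committed. -/
def Free (S : Set (E × Bool)) (e : E) : Prop :=
  e ∉ G.directed ∧ ∀ d, (e, d) ∉ S

def Ok (S : Set (E × Bool)) (p : E × Bool) : Prop := p ∈ G.dset S ∨ G.Free S p.1

/-- A mixed step: use committed pairs forward, free edges in either direction. -/
def mstep (S : Set (E × Bool)) (u v : V) : Prop :=
  ∃ p, G.Ok S p ∧ G.epSrc p.1 p.2 = u ∧ G.epTgt p.1 p.2 = v

def Consistent (S : Set (E × Bool)) : Prop :=
  ∀ e : E, ¬((e, true) ∈ G.dset S ∧ (e, false) ∈ G.dset S)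

lemma consistent_eq {S : Set (E × Bool)} (h : G.Consistent S) {e : E} {d d' : Bool}
    (h1 : (e, d) ∈ G.dset S) (h2 : (e, d') ∈ G.dset S) : d = d' := by
  cases d <;> cases d'
  · rfl
  · exact absurd ⟨h2, h1⟩ (h e)
  · exact absurd ⟨h1, h2⟩ (h e)
  · rfl

/-- The invariant for Zorn's lemma: consistent, and every committed pair lies on
a closed directed walk. -/
def GoodS (S : Set (E × Bool)) : Prop :=
  G.Consistent S ∧
  ∀ p ∈ S, Relation.ReflTransGen (G.sstep S) (G.epTgt p.1 p.2) (G.epSrc p.1 p.2)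

def IsWalk (S : Set (E × Bool)) : V → List (E × Bool) → V → Prop
  | u, [], v => u = v
  | u, p :: l, v => G.Ok S p ∧ G.epSrc p.1 p.2 = u ∧ IsWalk S (G.epTgt p.1 p.2) l v

@[simp] lemma isWalk_nil {S : Set (E × Bool)} {u v : V} : G.IsWalk S u [] v ↔ u = v :=
  Iff.rfl

@[simp] lemma isWalk_cons {S : Set (E × Bool)} {u v : V} {p : E × Bool}
    {l : List (E × Bool)} :
    G.IsWalk S u (p :: l) v ↔
      G.Ok S p ∧ G.epSrc p.1 p.2 = u ∧ G.IsWalk S (G.epTgt p.1 p.2) l v := by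
  rw [IsWalk]

lemma isWalk_append {S : Set (E × Bool)} {l₁ l₂ : List (E × Bool)} {u v : V} :
    G.IsWalk S u (l₁ ++ l₂) v ↔ ∃ w, G.IsWalk S u l₁ w ∧ G.IsWalk S w l₂ v := by
  induction l₁ generalizing u with
  | nil => simp
  | cons p l ih => simp [ih, and_assoc]

lemma walk_of_rtg {S : Set (E × Bool)} {u v : V}
    (h : Relation.ReflTransGen (G.mstep S) u v) : ∃ l, G.IsWalk S u l v := by
  induction h with
  | refl => exact ⟨[], rfl⟩
  | tail h₁ h₂ ih =>
    obtain ⟨l, hl⟩ := ih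
    obtain ⟨p, hok, hs, ht⟩ := h₂
    exact ⟨l ++ [p], (G.isWalk_append).2 ⟨_, hl, hok, hs, ht⟩⟩

lemma isWalk_ok {S : Set (E × Bool)} :
    ∀ {u : V} {l : List (E × Bool)} {v : V}, G.IsWalk S u l v → ∀ p ∈ l, G.Ok S p := by
  intro u l
  induction l generalizing u with
  | nil => intro v _ p hp; simp at hp
  | cons q l ih =>
    rintro v ⟨hq, -, hw⟩ p hp
    rcases List.mem_cons.1 hp with rfl | hp
    · exact hq
    · exact ih hw p hp

lemma isWalk_splice {S : Set (E × Bool)} {u v : V} {e : E} {d : Bool}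
    {la lb lc : List (E × Bool)}
    (h : G.IsWalk S u (la ++ (e, d) :: (lb ++ (e, !d) :: lc)) v) :
    G.IsWalk S u (la ++ lc) v := by
  obtain ⟨w, hla, -, hs, hrest⟩ := (G.isWalk_append).1 h
  obtain ⟨w2, hlb, -, hs2, hlc⟩ := (G.isWalk_append).1 hrest
  rw [G.epTgt_not, hs] at hlc
  exact (G.isWalk_append).2 ⟨w, hla, hlc⟩

lemma exists_cf_walk {S : Set (E × Bool)} :
    ∀ (n : ℕ) {u v : V} (l : List (E × Bool)), l.length ≤ n → G.IsWalk S u l v →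
    ∃ l', G.IsWalk S u l' v ∧ ∀ e : E, ¬((e, true) ∈ l' ∧ (e, false) ∈ l') := by
  intro n
  induction n with
  | zero =>
    intro u v l hl hw
    rw [Nat.le_zero, List.length_eq_zero_iff] at hl
    subst hl
    exact ⟨[], hw, by simp⟩
  | succ n ih =>
    intro u v l hl hw
    by_cases hcf : ∀ e : E, ¬((e, true) ∈ l ∧ (e, false) ∈ l)
    · exact ⟨l, hw, hcf⟩
    · push_neg at hcf
      obtain ⟨e, ht, hf⟩ := hcf
      have hdecomp : ∃ (la lb lc : List (E × Bool)) (d : Bool),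
          l = la ++ (e, d) :: (lb ++ (e, !d) :: lc) := by
        obtain ⟨s, t, rfl⟩ := List.append_of_mem ht
        rcases List.mem_append.1 hf with hfs | hft
        · obtain ⟨s', t', rfl⟩ := List.append_of_mem hfs
          exact ⟨s', t', t, false, by simp⟩
        · rcases List.mem_cons.1 hft with hft | hft
          · simp at hft
          · obtain ⟨s'', t'', rfl⟩ := List.append_of_mem hft
            exact ⟨s, s'', t'', true, by simp⟩
      obtain ⟨la, lb, lc, d, rfl⟩ := hdecomp
      have h2 := G.isWalk_splice hw
      have hlen : (la ++ lc).length ≤ n := by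
        simp only [List.length_append, List.length_cons] at hl ⊢
        omega
      exact ih _ hlen h2

lemma rtg_of_isWalk {S S' : Set (E × Bool)} :
    ∀ {u : V} {l : List (E × Bool)} {v : V}, (∀ p ∈ l, p ∈ G.dset S') →
      G.IsWalk S u l v → Relation.ReflTransGen (G.sstep S') u v := by
  intro u l
  induction l generalizing u with
  | nil => rintro v _ rfl; rfl
  | cons p l ih =>
    rintro v hmem ⟨hp, hs, hw⟩
    exact Relation.ReflTransGen.head ⟨p, hmem p (by simp), hs, rfl⟩
      (ih (fun q hq => hmem q (by simp [hq])) hw)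

lemma cross_of_closed {S : Set (E × Bool)} {A : Set V}
    (hA : ∀ v ∈ A, ∀ w, G.mstep S v w → w ∈ A) {f : E}
    (hx : Xor' (G.fst f ∈ A) (G.snd f ∈ A)) :
    ∃ d, (f, d) ∈ G.dset S ∧ G.epSrc f d ∉ A ∧ G.epTgt f d ∈ A := by
  by_cases hfree : G.Free S f
  · exfalso
    rcases hx with ⟨h1, h2⟩ | ⟨h1, h2⟩
    · exact h2 (hA _ h1 _ ⟨(f, true), Or.inr hfree, rfl, rfl⟩)
    · exact h2 (hA _ h1 _ ⟨(f, false), Or.inr hfree, rfl, rfl⟩)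
  · have hd : ∃ d, (f, d) ∈ G.dset S := by
      unfold Free at hfree
      push_neg at hfree
      by_cases hdir : f ∈ G.directed
      · exact ⟨true, Or.inr ⟨hdir, rfl⟩⟩
      · obtain ⟨d, hd⟩ := hfree hdir
        exact ⟨d, Or.inl hd⟩
    obtain ⟨d, hd⟩ := hd
    refine ⟨d, hd, ?_⟩
    have hnot : G.epSrc f d ∉ A := by
      intro hs
      have ht := hA _ hs _ ⟨(f, d), Or.inl hd, rfl, rfl⟩
      rcases G.ep_cases f d with ⟨h1, h2⟩ | ⟨h1, h2⟩ <;> rw [h1] at hs <;> rw [h2] at ht <;>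
        rcases hx with ⟨-, hb⟩ | ⟨-, hb⟩ <;> tauto
    refine ⟨hnot, ?_⟩
    rcases G.ep_cases f d with ⟨h1, h2⟩ | ⟨h1, h2⟩ <;> rw [h1] at hnot <;> rw [h2] <;>
      rcases hx with ⟨ha, -⟩ | ⟨ha, -⟩ <;> tauto

lemma noBadCutS
    (H2 : ¬ ∃ U : Set V, U.Nonempty ∧ U ≠ Set.univ ∧
      ∀ e : E, Xor' (G.fst e ∈ U) (G.snd e ∈ U) →
        e ∈ G.directed ∧ G.fst e ∈ U ∧ G.snd e ∉ U)
    {S : Set (E × Bool)} (hS : G.GoodS S) {U : Set V}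
    (hne : U.Nonempty) (hproper : U ≠ Set.univ)
    (hcut : ∀ f : E, Xor' (G.fst f ∈ U) (G.snd f ∈ U) →
      ∃ d, (f, d) ∈ G.dset S ∧ G.epSrc f d ∈ U) : False := by
  apply H2
  refine ⟨U, hne, hproper, ?_⟩
  intro f hx
  obtain ⟨d, hd, hsrc⟩ := hcut f hx
  have htgt : G.epTgt f d ∉ U := by
    rcases G.ep_cases f d with ⟨h1, h2⟩ | ⟨h1, h2⟩ <;> rw [h1] at hsrc <;> rw [h2] <;>
      rcases hx with ⟨ha, hb⟩ | ⟨ha, hb⟩ <;> tauto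
  rcases hd with hdS | ⟨hdir, hdt⟩
  · exfalso
    obtain ⟨p, q, hp, hq, hstep⟩ := rtg_cross (hS.2 _ hdS) htgt hsrc
    obtain ⟨g, hg, hgs, hgt⟩ := hstep
    have hxg : Xor' (G.fst g.1 ∈ U) (G.snd g.1 ∈ U) := by
      rcases G.ep_cases g.1 g.2 with ⟨h1, h2⟩ | ⟨h1, h2⟩
      · rw [hgs] at h1; rw [hgt] at h2
        exact xor'_inr (h2 ▸ hq) (h1 ▸ hp)
      · rw [hgs] at h1; rw [hgt] at h2
        exact xor'_inl (h2 ▸ hq) (h1 ▸ hp)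
    obtain ⟨d', hd', hsrc'⟩ := hcut g.1 hxg
    have hdd : d' = g.2 := G.consistent_eq hS.1 hd' hg
    rw [hdd, hgs] at hsrc'
    exact hp hsrc'
  · simp only at hdt
    subst hdt
    exact ⟨hdir, hsrc, htgt⟩



lemma extend_reach
    (H1' : ∀ e : E, ∀ u v : V, Relation.ReflTransGen (G.adjIn {e' | e' ≠ e}) u v)
    (H2 : ¬ ∃ U : Set V, U.Nonempty ∧ U ≠ Set.univ ∧
      ∀ e : E, Xor' (G.fst e ∈ U) (G.snd e ∈ U) →
        e ∈ G.directed ∧ G.fst e ∈ U ∧ G.snd e ∉ U)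
    {M : Set (E × Bool)} (hM : G.GoodS M) {e₀ : E} (he₀ : ∀ d, (e₀, d) ∉ M) :
    ∃ d₀ : Bool, (e₀ ∈ G.directed → d₀ = true) ∧
      Relation.ReflTransGen (G.mstep (insert (e₀, d₀) M))
        (G.epTgt e₀ d₀) (G.epSrc e₀ d₀) := by
  classical
  set A : Bool → Set V := fun d =>
    {v | Relation.ReflTransGen (G.mstep (insert (e₀, d) M)) (G.epTgt e₀ d) v} with hA
  have hAclosed : ∀ d, ∀ v ∈ A d, ∀ w, G.mstep (insert (e₀, d) M) v w → w ∈ A d :=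
    fun d v hv w hw => hv.tail hw
  have hbA : ∀ d, G.epTgt e₀ d ∈ A d := fun d => Relation.ReflTransGen.refl
  -- crossing edges of the complement of A d
  have hcross : ∀ d f, Xor' (G.fst f ∈ (A d)ᶜ) (G.snd f ∈ (A d)ᶜ) →
      ∃ d', ((f, d') = (e₀, d) ∨ (f, d') ∈ G.dset M) ∧ G.epSrc f d' ∈ (A d)ᶜ := by
    intro d f hx
    have hx' : Xor' (G.fst f ∈ A d) (G.snd f ∈ A d) := by
      rcases hx with ⟨h1, h2⟩ | ⟨h1, h2⟩
      · exact xor'_inr (not_not.1 h2) h1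
      · exact xor'_inl (not_not.1 h2) h1
    obtain ⟨d', hd', hs, -⟩ := G.cross_of_closed (hAclosed d) hx'
    rw [G.dset_insert] at hd'
    rcases hd' with hd' | hd'
    · exact ⟨d', Or.inl hd', hs⟩
    · exact ⟨d', Or.inr hd', hs⟩
  by_cases hdir : e₀ ∈ G.directed
  · -- direction is forced; the cut would be a bad directed cut
    refine ⟨true, fun _ => rfl, ?_⟩
    by_contra hnr
    have haU : G.epSrc e₀ true ∈ (A true)ᶜ := hnr
    refine G.noBadCutS H2 hM ⟨_, haU⟩
      (Set.ne_univ_iff_exists_notMem _ |>.2 ⟨_, fun h => h (hbA true)⟩) ?_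
    intro f hx
    obtain ⟨d', hd', hs⟩ := hcross true f hx
    rcases hd' with hd' | hd'
    · obtain ⟨rfl, rfl⟩ : f = e₀ ∧ d' = true := Prod.mk.injEq .. ▸ hd'
      exact ⟨true, Or.inr ⟨hdir, rfl⟩, hs⟩
    · exact ⟨d', hd', hs⟩
  · -- undirected: at least one of the two directions must work
    by_cases hr1 : G.epSrc e₀ true ∈ A true
    · exact ⟨true, fun h => absurd h hdir, hr1⟩
    by_cases hr2 : G.epSrc e₀ false ∈ A false
    · exact ⟨false, fun h => absurd h hdir, hr2⟩
    exfalso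
    set U₁ : Set V := (A true)ᶜ with hU₁
    set U₂ : Set V := (A false)ᶜ with hU₂
    have ha₁ : G.fst e₀ ∈ U₁ := hr1
    have hb₁ : G.snd e₀ ∉ U₁ := fun h => h (hbA true)
    have ha₂ : G.snd e₀ ∈ U₂ := hr2
    have hb₂ : G.fst e₀ ∉ U₂ := fun h => h (hbA false)
    have hcut₁ : ∀ f, Xor' (G.fst f ∈ U₁) (G.snd f ∈ U₁) →
        ∃ d', ((f, d') = (e₀, true) ∨ (f, d') ∈ G.dset M) ∧ G.epSrc f d' ∈ U₁ :=
      hcross true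
    have hcut₂ : ∀ f, Xor' (G.fst f ∈ U₂) (G.snd f ∈ U₂) →
        ∃ d', ((f, d') = (e₀, false) ∨ (f, d') ∈ G.dset M) ∧ G.epSrc f d' ∈ U₂ :=
      hcross false
    -- the intersection is empty
    have hW₁ : U₁ ∩ U₂ = ∅ := by
      by_contra hWne
      refine G.noBadCutS H2 hM (Set.nonempty_iff_ne_empty.2 hWne) ?_ ?_
      · intro h
        exact hb₂ ((h ▸ Set.mem_univ (G.fst e₀)) : G.fst e₀ ∈ U₁ ∩ U₂).2
      · intro f hx
        rcases hx with ⟨⟨hf1, hf2⟩, hs⟩ | ⟨⟨hs1, hs2⟩, hf⟩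
        · -- fst ∈ U₁ ∩ U₂, snd ∉
          rw [Set.mem_inter_iff, not_and_or] at hs
          rcases hs with hs | hs
          · obtain ⟨d', hm, hsrc⟩ := hcut₁ f (xor'_inl hf1 hs)
            rcases hm with hm | hm
            · exact absurd hf2 (by rw [(Prod.mk.injEq .. ▸ hm : f = e₀ ∧ _).1]; exact hb₂)
            · refine ⟨d', hm, ?_⟩
              rcases G.ep_cases f d' with ⟨h1, -⟩ | ⟨h1, -⟩
              · rw [h1]; exact ⟨hf1, hf2⟩
              · rw [h1] at hsrc; exact absurd hsrc hs
          · obtain ⟨d', hm, hsrc⟩ := hcut₂ f (xor'_inl hf2 hs)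
            rcases hm with hm | hm
            · exact absurd hf2 (by rw [(Prod.mk.injEq .. ▸ hm : f = e₀ ∧ _).1]; exact hb₂)
            · refine ⟨d', hm, ?_⟩
              rcases G.ep_cases f d' with ⟨h1, -⟩ | ⟨h1, -⟩
              · rw [h1]; exact ⟨hf1, hf2⟩
              · rw [h1] at hsrc; exact absurd hsrc hs
        · -- snd ∈ U₁ ∩ U₂, fst ∉
          rw [Set.mem_inter_iff, not_and_or] at hf
          rcases hf with hf | hf
          · obtain ⟨d', hm, hsrc⟩ := hcut₁ f (xor'_inr hs1 hf)
            rcases hm with hm | hm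
            · exact absurd hs1 (by rw [(Prod.mk.injEq .. ▸ hm : f = e₀ ∧ _).1]; exact hb₁)
            · refine ⟨d', hm, ?_⟩
              rcases G.ep_cases f d' with ⟨h1, -⟩ | ⟨h1, -⟩
              · rw [h1] at hsrc; exact absurd hsrc hf
              · rw [h1]; exact ⟨hs1, hs2⟩
          · obtain ⟨d', hm, hsrc⟩ := hcut₂ f (xor'_inr hs2 hf)
            rcases hm with hm | hm
            · exact absurd hs1 (by rw [(Prod.mk.injEq .. ▸ hm : f = e₀ ∧ _).1]; exact hb₁)
            · refine ⟨d', hm, ?_⟩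
              rcases G.ep_cases f d' with ⟨h1, -⟩ | ⟨h1, -⟩
              · rw [h1] at hsrc; exact absurd hsrc hf
              · rw [h1]; exact ⟨hs1, hs2⟩
    -- the union is everything
    have hW₂ : U₁ ∪ U₂ = Set.univ := by
      by_contra hWne
      refine G.noBadCutS H2 hM ⟨G.fst e₀, Or.inl ha₁⟩ hWne ?_
      intro f hx
      rcases hx with ⟨hf, hs⟩ | ⟨hs, hf⟩
      · rw [Set.mem_union, not_or] at hs
        rcases hf with hf | hf
        · obtain ⟨d', hm, hsrc⟩ := hcut₁ f (xor'_inl hf hs.1)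
          rcases hm with hm | hm
          · exact absurd hs.2 (by rw [(Prod.mk.injEq .. ▸ hm : f = e₀ ∧ _).1]; exact fun h => h ha₂)
          · refine ⟨d', hm, ?_⟩
            rcases G.ep_cases f d' with ⟨h1, -⟩ | ⟨h1, -⟩
            · rw [h1]; exact Or.inl hf
            · rw [h1] at hsrc; exact absurd hsrc hs.1
        · obtain ⟨d', hm, hsrc⟩ := hcut₂ f (xor'_inl hf hs.2)
          rcases hm with hm | hm
          · exact absurd hf (by rw [(Prod.mk.injEq .. ▸ hm : f = e₀ ∧ _).1]; exact hb₂)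
          · refine ⟨d', hm, ?_⟩
            rcases G.ep_cases f d' with ⟨h1, -⟩ | ⟨h1, -⟩
            · rw [h1]; exact Or.inr hf
            · rw [h1] at hsrc; exact absurd hsrc hs.2
      · rw [Set.mem_union, not_or] at hf
        rcases hs with hs | hs
        · obtain ⟨d', hm, hsrc⟩ := hcut₁ f (xor'_inr hs hf.1)
          rcases hm with hm | hm
          · exact absurd ha₁ (by rw [← (Prod.mk.injEq .. ▸ hm : f = e₀ ∧ _).1]; exact hf.1)
          · refine ⟨d', hm, ?_⟩
            rcases G.ep_cases f d' with ⟨h1, -⟩ | ⟨h1, -⟩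
            · rw [h1] at hsrc; exact absurd hsrc hf.1
            · rw [h1]; exact Or.inl hs
        · obtain ⟨d', hm, hsrc⟩ := hcut₂ f (xor'_inr hs hf.2)
          rcases hm with hm | hm
          · exact absurd ha₁ (by rw [← (Prod.mk.injEq .. ▸ hm : f = e₀ ∧ _).1]; exact hf.1)
          · refine ⟨d', hm, ?_⟩
            rcases G.ep_cases f d' with ⟨h1, -⟩ | ⟨h1, -⟩
            · rw [h1] at hsrc; exact absurd hsrc hf.2
            · rw [h1]; exact Or.inr hs
    -- now δ(U₁) = {e₀}, contradicting 2-edge-connectedness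
    have hcompl : ∀ x : V, x ∈ U₂ ↔ x ∉ U₁ := by
      intro x
      constructor
      · intro hx2 hx1
        exact absurd (hW₁ ▸ (Set.mem_inter hx1 hx2)) (Set.notMem_empty x)
      · intro hx1
        rcases (hW₂ ▸ Set.mem_univ x : x ∈ U₁ ∪ U₂) with h | h
        · exact absurd h hx1
        · exact h
    obtain ⟨p, q, hp, hq, hpq⟩ :=
      rtg_cross (U := U₁ᶜ) (H1' e₀ (G.fst e₀) (G.snd e₀)) (fun h => h ha₁) hb₁
    have hp : p ∈ U₁ := Set.not_notMem.1 hp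
    have hq : q ∉ U₁ := hq
    obtain ⟨f, hfne, hends⟩ := hpq
    have hxor₁ : Xor' (G.fst f ∈ U₁) (G.snd f ∈ U₁) := by
      rcases hends with ⟨h1, h2⟩ | ⟨h1, h2⟩
      · exact xor'_inl (h1 ▸ hp) (h2 ▸ hq)
      · exact xor'_inr (h2 ▸ hp) (h1 ▸ hq)
    have hxor₂ : Xor' (G.fst f ∈ U₂) (G.snd f ∈ U₂) := by
      rcases hxor₁ with ⟨h1, h2⟩ | ⟨h1, h2⟩
      · exact xor'_inr ((hcompl _).2 h2) (fun h => (hcompl _).1 h h1)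
      · exact xor'_inl ((hcompl _).2 h2) (fun h => (hcompl _).1 h h1)
    obtain ⟨d₁, hm₁, hs₁⟩ := hcut₁ f hxor₁
    obtain ⟨d₂, hm₂, hs₂⟩ := hcut₂ f hxor₂
    rcases hm₁ with hm₁ | hm₁
    · exact hfne (Prod.mk.injEq .. ▸ hm₁ : f = e₀ ∧ _).1
    rcases hm₂ with hm₂ | hm₂
    · exact hfne (Prod.mk.injEq .. ▸ hm₂ : f = e₀ ∧ _).1
    have : d₁ = d₂ := G.consistent_eq hM.1 hm₁ hm₂
    subst this
    exact absurd (hW₁ ▸ (Set.mem_inter hs₁ hs₂)) (Set.notMem_empty _)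



lemma extend_step
    (H1' : ∀ e : E, ∀ u v : V, Relation.ReflTransGen (G.adjIn {e' | e' ≠ e}) u v)
    (H2 : ¬ ∃ U : Set V, U.Nonempty ∧ U ≠ Set.univ ∧
      ∀ e : E, Xor' (G.fst e ∈ U) (G.snd e ∈ U) →
        e ∈ G.directed ∧ G.fst e ∈ U ∧ G.snd e ∉ U)
    {M : Set (E × Bool)} (hM : G.GoodS M) {e₀ : E} (he₀ : ∀ d, (e₀, d) ∉ M) :
    ∃ M' : Set (E × Bool), G.GoodS M' ∧ M ⊆ M' ∧ ∃ d, (e₀, d) ∈ M' := by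
  classical
  obtain ⟨d₀, hd₀dir, hreach⟩ := G.extend_reach H1' H2 hM he₀
  obtain ⟨l₀, hl₀⟩ := G.walk_of_rtg hreach
  obtain ⟨l, hl, hcf⟩ := G.exists_cf_walk l₀.length l₀ le_rfl hl₀
  set M' : Set (E × Bool) := insert (e₀, d₀) (M ∪ {p | p ∈ l}) with hM'
  have hsub : M ⊆ M' := fun p hp => Or.inr (Or.inl hp)
  have hdsub : G.dset M ⊆ G.dset M' := G.dset_mono hsub
  have he₀M' : (e₀, d₀) ∈ G.dset M' := Or.inl (Set.mem_insert _ _)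
  have hOk : ∀ p ∈ l, G.Ok (insert (e₀, d₀) M) p := G.isWalk_ok hl
  have hlsub : ∀ p ∈ l, p ∈ G.dset M' := fun p hp => Or.inl (Or.inr (Or.inr hp))
  have hchar : ∀ p : E × Bool, p ∈ G.dset M' →
      p = (e₀, d₀) ∨ p ∈ G.dset M ∨
        (p ∈ l ∧ p.1 ∉ G.directed ∧ ∀ d, (p.1, d) ∉ insert (e₀, d₀) M) := by
    rintro p (hp | hp)
    · rcases hp with hp | hp | hp
      · exact Or.inl hp
      · exact Or.inr (Or.inl (Or.inl hp))
      · rcases hOk p hp with hp' | hp'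
        · rw [G.dset_insert] at hp'
          rcases hp' with hp' | hp'
          · exact Or.inl hp'
          · exact Or.inr (Or.inl hp')
        · exact Or.inr (Or.inr ⟨hp, hp'⟩)
    · exact Or.inr (Or.inl (Or.inr hp))
  have hnoM : ∀ b, (e₀, b) ∈ G.dset M → (e₀ ∈ G.directed ∧ b = true) := by
    rintro b (hb | hb)
    · exact absurd hb (he₀ b)
    · exact hb
  have hcons' : G.Consistent M' := by
    rintro e ⟨h₁, h₂⟩
    rcases hchar _ h₁ with hA | hA | hA <;> rcases hchar _ h₂ with hB | hB | hB
    · have e₁ : true = d₀ := ((Prod.mk.injEq .. ▸ hA) : e = e₀ ∧ _).2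
      have e₂ : false = d₀ := ((Prod.mk.injEq .. ▸ hB) : e = e₀ ∧ _).2
      exact Bool.false_ne_true (e₂.trans e₁.symm)
    · obtain ⟨rfl, hd⟩ : e = e₀ ∧ true = d₀ := Prod.mk.injEq .. ▸ hA
      obtain ⟨hdi, hb⟩ := hnoM false hB
      exact Bool.false_ne_true hb
    · obtain ⟨rfl, hd⟩ : e = e₀ ∧ true = d₀ := Prod.mk.injEq .. ▸ hA
      exact hB.2.2 d₀ (Set.mem_insert _ _)
    · obtain ⟨rfl, hd⟩ : e = e₀ ∧ false = d₀ := Prod.mk.injEq .. ▸ hB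
      obtain ⟨hdi, hb⟩ := hnoM true hA
      rw [hd₀dir hdi] at hd
      exact Bool.false_ne_true hd
    · exact hM.1 e ⟨hA, hB⟩
    · rcases hA with hA | hA
      · exact hB.2.2 true (Set.mem_insert_of_mem _ hA)
      · exact hB.2.1 hA.1
    · obtain ⟨rfl, hd⟩ : e = e₀ ∧ false = d₀ := Prod.mk.injEq .. ▸ hB
      exact hA.2.2 d₀ (Set.mem_insert _ _)
    · rcases hB with hB | hB
      · exact hA.2.2 false (Set.mem_insert_of_mem _ hB)
      · exact hA.2.1 hB.1
    · exact hcf e ⟨hA.1, hB.1⟩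
  refine ⟨M', ⟨hcons', ?_⟩, hsub, d₀, Set.mem_insert _ _⟩
  have hstep₀ : G.sstep M' (G.epSrc e₀ d₀) (G.epTgt e₀ d₀) := ⟨(e₀, d₀), he₀M', rfl, rfl⟩
  have hlwalk : Relation.ReflTransGen (G.sstep M') (G.epTgt e₀ d₀) (G.epSrc e₀ d₀) :=
    G.rtg_of_isWalk hlsub hl
  rintro p (hp | hp | hp)
  · subst hp; exact hlwalk
  · exact Relation.ReflTransGen.mono (fun x y h => G.sstep_mono hdsub h) _ _ (hM.2 p hp)
  · -- p occurs on the walk l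
    obtain ⟨la, lb, rfl⟩ := List.append_of_mem hp
    obtain ⟨w, hla, hok, hsP, hlb⟩ := (G.isWalk_append).1 hl
    have h₁ : Relation.ReflTransGen (G.sstep M') (G.epTgt p.1 p.2) (G.epSrc e₀ d₀) :=
      G.rtg_of_isWalk (fun q hq => hlsub q (by simp [hq])) hlb
    have h₂ : Relation.ReflTransGen (G.sstep M') (G.epTgt e₀ d₀) w :=
      G.rtg_of_isWalk (fun q hq => hlsub q (by simp [hq])) hla
    rw [hsP]
    exact (h₁.tail hstep₀).trans h₂


theorem mixedGraph_strongly_connected_orientation_iff'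
    {V E : Type*} (G : MixedGraph V E) :
    (∃ o : E → Bool, G.IsOrientation o ∧ (∀ u v : V, Relation.ReflTransGen (G.step o) u v)) ↔
      ((∀ u v : V, Relation.ReflTransGen (G.adjIn Set.univ) u v) ∧
       ∀ e : E, ∀ u v : V, Relation.ReflTransGen (G.adjIn {e' | e' ≠ e}) u v) ∧
      ¬ ∃ U : Set V, U.Nonempty ∧ U ≠ Set.univ ∧
        ∀ e : E, Xor' (G.fst e ∈ U) (G.snd e ∈ U) →
          e ∈ G.directed ∧ G.fst e ∈ U ∧ G.snd e ∉ U := by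
  constructor
  · rintro ⟨o, hor, hsc⟩
    refine ⟨⟨?_, ?_⟩, ?_⟩
    · -- connectivity
      intro u v
      refine Relation.ReflTransGen.mono (?_ : ∀ x y, G.step o x y → G.adjIn Set.univ x y) _ _ (hsc u v)
      rintro x y ⟨e, ⟨-, h1, h2⟩ | ⟨-, h1, h2⟩⟩
      · exact ⟨e, Set.mem_univ e, Or.inl ⟨h1, h2⟩⟩
      · exact ⟨e, Set.mem_univ e, Or.inr ⟨h2, h1⟩⟩
    · -- no bridges
      intro e u v
      by_contra hv
      set C : Set V := {w | Relation.ReflTransGen (G.adjIn {e' | e' ≠ e}) u w} with hC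
      have huC : u ∈ C := Relation.ReflTransGen.refl
      have hCadj : ∀ w ∈ C, ∀ x, G.adjIn {e' | e' ≠ e} w x → x ∈ C :=
        fun w hw x hwx => hw.tail hwx
      have hadj_sym : ∀ (S : Set E) (w x : V), G.adjIn S w x → G.adjIn S x w := by
        rintro S w x ⟨f, hf, h⟩
        exact ⟨f, hf, h.symm⟩
      by_cases hcl : ∀ x y, G.step o x y → x ∈ C → y ∈ C
      · have hrc : ∀ {a b : V}, Relation.ReflTransGen (G.step o) a b → a ∈ C → b ∈ C := by
          intro a b h
          induction h with
          | refl => exact id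
          | tail h₁ h₂ ih => exact fun ha => hcl _ _ h₂ (ih ha)
        exact hv (hrc (hsc u v) huC)
      · push_neg at hcl
        obtain ⟨x, y, hxy, hxC, hyC⟩ := hcl
        obtain ⟨f, hfcase⟩ := hxy
        have hfe : f = e := by
          by_contra hne
          refine hyC (hCadj x hxC y ⟨f, hne, ?_⟩)
          rcases hfcase with ⟨-, h1, h2⟩ | ⟨-, h1, h2⟩
          · exact Or.inl ⟨h1, h2⟩
          · exact Or.inr ⟨h2, h1⟩
        subst hfe
        obtain ⟨p, q, hp, hq, hpq⟩ := rtg_cross (hsc v u) hv huC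
        obtain ⟨g, hgcase⟩ := hpq
        have hge : g = f := by
          by_contra hne
          refine hp (hCadj q hq p (hadj_sym _ p q ⟨g, hne, ?_⟩))
          rcases hgcase with ⟨-, h1, h2⟩ | ⟨-, h1, h2⟩
          · exact Or.inl ⟨h1, h2⟩
          · exact Or.inr ⟨h2, h1⟩
        subst hge
        rcases hfcase with ⟨ho1, h1, h2⟩ | ⟨ho1, h1, h2⟩ <;>
          rcases hgcase with ⟨ho2, h3, h4⟩ | ⟨ho2, h3, h4⟩
        · exact hyC (h2 ▸ h4 ▸ hq)
        · rw [ho1] at ho2; exact Bool.false_ne_true ho2.symm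
        · rw [ho1] at ho2; exact Bool.false_ne_true ho2
        · exact hyC (h2 ▸ h4 ▸ hq)
    · -- no bad directed cut
      rintro ⟨U, hne, hproper, hcut⟩
      obtain ⟨u, hu⟩ := hne
      obtain ⟨v, hv⟩ := Set.ne_univ_iff_exists_notMem _ |>.1 hproper
      obtain ⟨p, q, hp, hq, hpq⟩ := rtg_cross (hsc v u) hv hu
      obtain ⟨f, hfcase⟩ := hpq
      rcases hfcase with ⟨ho1, h1, h2⟩ | ⟨ho1, h1, h2⟩
      · have hx : Xor' (G.fst f ∈ U) (G.snd f ∈ U) := Or.inr ⟨h2 ▸ hq, h1 ▸ hp⟩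
        exact hp (h1 ▸ (hcut f hx).2.1)
      · have hx : Xor' (G.fst f ∈ U) (G.snd f ∈ U) := Or.inl ⟨h2 ▸ hq, h1 ▸ hp⟩
        have := hor f (hcut f hx).1
        rw [ho1] at this
        exact Bool.false_ne_true this
  · rintro ⟨⟨H1, H1'⟩, H2⟩
    classical
    have hempty : G.GoodS (∅ : Set (E × Bool)) := by
      constructor
      · rintro e ⟨h₁, h₂⟩
        rcases h₂ with h₂ | h₂
        · exact Set.notMem_empty _ h₂
        · exact Bool.false_ne_true h₂.2
      · rintro p hp
        exact absurd hp (Set.notMem_empty p)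
    have hchain : ∀ c ⊆ {S : Set (E × Bool) | G.GoodS S}, IsChain (· ⊆ ·) c →
        c.Nonempty → ∃ ub ∈ {S : Set (E × Bool) | G.GoodS S}, ∀ s ∈ c, s ⊆ ub := by
      intro c hc hch hne
      refine ⟨⋃₀ c, ⟨?_, ?_⟩, fun s hs => Set.subset_sUnion_of_mem hs⟩
      · rintro e ⟨h₁, h₂⟩
        rcases h₂ with h₂ | h₂
        swap
        · exact Bool.false_ne_true h₂.2
        obtain ⟨S₂, hS₂c, hm₂⟩ := h₂
        rcases h₁ with h₁ | h₁
        · obtain ⟨S₁, hS₁c, hm₁⟩ := h₁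
          rcases hch.total hS₁c hS₂c with hss | hss
          · exact (hc hS₂c).1 e ⟨Or.inl (hss hm₁), Or.inl hm₂⟩
          · exact (hc hS₁c).1 e ⟨Or.inl hm₁, Or.inl (hss hm₂)⟩
        · exact (hc hS₂c).1 e ⟨Or.inr h₁, Or.inl hm₂⟩
      · rintro p hp
        obtain ⟨S, hSc, hpS⟩ := hp
        exact Relation.ReflTransGen.mono
          (fun x y h => G.sstep_mono (G.dset_mono (Set.subset_sUnion_of_mem hSc)) h) _ _ ((hc hSc).2 p hpS)
    obtain ⟨M, -, hmax⟩ :=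
      zorn_subset_nonempty {S : Set (E × Bool) | G.GoodS S} hchain ∅ hempty
    have hGoodM : G.GoodS M := hmax.1
    have hall : ∀ e : E, ∃ d, (e, d) ∈ M := by
      intro e
      by_contra h
      push_neg at h
      obtain ⟨M', hG', hsub, d, hd⟩ := G.extend_step H1' H2 hGoodM h
      exact h d (hmax.2 hG' hsub hd)
    choose dd hdd using hall
    have hstep_of_sstep : ∀ x y, G.sstep M x y → G.step dd x y := by
      rintro x y ⟨p, hp, hs, ht⟩
      have hpd : p.2 = dd p.1 := G.consistent_eq hGoodM.1 hp (Or.inl (hdd p.1))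
      refine ⟨p.1, ?_⟩
      cases hb : p.2
      · rw [hb] at hs ht hpd
        exact Or.inr ⟨hpd.symm, by simpa using hs, by simpa using ht⟩
      · rw [hb] at hs ht hpd
        exact Or.inl ⟨hpd.symm, by simpa using hs, by simpa using ht⟩
    refine ⟨dd, ?_, ?_⟩
    · intro e he
      exact (G.consistent_eq hGoodM.1 (Or.inl (hdd e)) (Or.inr ⟨he, rfl⟩))
    · intro u v
      have h := H1 u v
      induction h with
      | refl => exact Relation.ReflTransGen.refl
      | tail h₁ h₂ ih =>
        rename_i b c
        refine ih.trans ?_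
        obtain ⟨e, -, hends⟩ := h₂
        have hwalk : Relation.ReflTransGen (G.step dd) (G.epTgt e (dd e)) (G.epSrc e (dd e)) :=
          Relation.ReflTransGen.mono hstep_of_sstep _ _ (hGoodM.2 (e, dd e) (hdd e))
        have hstep1 : G.step dd (G.epSrc e (dd e)) (G.epTgt e (dd e)) := by
          refine ⟨e, ?_⟩
          cases hb : dd e
          · exact Or.inr ⟨rfl, by simp, by simp⟩
          · exact Or.inl ⟨rfl, by simp, by simp⟩
        rcases hends with ⟨hf, hsn⟩ | ⟨hf, hsn⟩
        · cases hb : dd e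
          · rw [hb] at hwalk
            simp only [epTgt_false, epSrc_false] at hwalk
            rw [hf, hsn] at hwalk
            exact hwalk
          · rw [hb] at hstep1
            simp only [epSrc_true, epTgt_true] at hstep1
            rw [hf, hsn] at hstep1
            exact Relation.ReflTransGen.single hstep1
        · cases hb : dd e
          · rw [hb] at hstep1
            simp only [epSrc_false, epTgt_false] at hstep1
            rw [hf, hsn] at hstep1
            exact Relation.ReflTransGen.single hstep1
          · rw [hb] at hwalk
            simp only [epTgt_true, epSrc_true] at hwalk
            rw [hf, hsn] at hwalk
            exact hwalk


end MixedGraph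

/-- Theorem 61.4 of Schrijver: the undirected edges of a mixed graph `G` can be
oriented so as to obtain a strongly connected digraph if and only if `G` is
2-edge-connected and there is no nonempty proper subset `U` of the vertices
such that every edge of the cut `δ(U)` is directed and oriented from `U` to
its complement. -/
theorem mixedGraph_strongly_connected_orientation_iff
    {V E : Type*} (G : MixedGraph V E) :
    (∃ o : E → Bool, G.IsOrientation o ∧ G.StrongConn o) ↔
      G.TwoEdgeConnected ∧
      ¬ ∃ U : Set V, U.Nonempty ∧ U ≠ Set.univ ∧
        ∀ e : E, Xor' (G.fst e ∈ U) (G.snd e ∈ U) →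
          e ∈ G.directed ∧ G.fst e ∈ U ∧ G.snd e ∉ U :=
  MixedGraph.mixedGraph_strongly_connected_orientation_iff' G
end
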